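/- Let R be an n×n real matrix whose symmetric part S = (R + Rᵀ)/2 is positive definite, and let v ∈ ℝⁿ be nonzero. Define P₀ = vᵀ R⁻¹ v and P₁ = vᵀ S⁻¹ v, and let K = (R·R⁻ᵀ + Rᵀ·R⁻¹)/4, whose eigenvalues are real. Then P₁ > 0 and 0 ≤ 1/2 + λ_min(K) ≤ P₀/P₁ ≤ 1/2 + λ_max(K) ≤ 1, where λ_min(K) and λ_max(K) denote the smallest and largest (real) eigenvalues of K. -/

import Mathlib

open Matrix Pointwise
open scoped MatrixOrder

lemma aux_spec_nonneg {n : ℕ} {A : Matrix (Fin n) (Fin n) ℝ} (hA : A.PosSemidef)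
    {μ : ℝ} (hμ : μ ∈ spectrum ℝ A) : 0 ≤ μ := by
  rw [spectrum.mem_iff] at hμ
  have hdet : (algebraMap ℝ (Matrix (Fin n) (Fin n) ℝ) μ - A).det = 0 := by
    by_contra h
    exact hμ ((Matrix.isUnit_iff_isUnit_det _).mpr (isUnit_iff_ne_zero.mpr h))
  obtain ⟨x, hx0, hx⟩ := (Matrix.exists_mulVec_eq_zero_iff).mpr hdet
  have hAx : A *ᵥ x = μ • x := by
    have := hx
    rw [sub_mulVec, sub_eq_zero] at this
    rw [← this, Algebra.algebraMap_eq_smul_one, smul_mulVec, one_mulVec]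
  have h1 : (0:ℝ) ≤ x ⬝ᵥ (A *ᵥ x) := by simpa using hA.dotProduct_mulVec_nonneg x
  rw [hAx, dotProduct_smul, smul_eq_mul] at h1
  have h2 : (0:ℝ) < x ⬝ᵥ x := by
    simpa using (dotProduct_star_self_pos_iff (v := x)).mpr hx0
  nlinarith

lemma aux_psd_of_forall {n : ℕ} {A : Matrix (Fin n) (Fin n) ℝ} (hA : A.IsHermitian)
    (h : ∀ μ ∈ spectrum ℝ A, 0 ≤ μ) : A.PosSemidef :=
  hA.posSemidef_iff_eigenvalues_nonneg.mpr fun i => h _ (hA.eigenvalues_mem_spectrum_real i)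

/-- Theorem 3 (profit ratio bounds): with `P₀ = vᵀR⁻¹v`, `P₁ = vᵀS⁻¹v` for
`S = (R + Rᵀ)/2` positive definite, and `K = (RR⁻ᵀ + RᵀR⁻¹)/4`, one has `P₁ > 0` and
`0 ≤ 1/2 + λ_min(K) ≤ P₀/P₁ ≤ 1/2 + λ_max(K) ≤ 1`. -/
theorem profit_ratio_bounds
    (n : ℕ) (R : Matrix (Fin n) (Fin n) ℝ)
    (hR : ∀ x : Fin n → ℝ, x ≠ 0 → 0 < x ⬝ᵥ (R *ᵥ x))
    (v : Fin n → ℝ) (hv : v ≠ 0)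
    (P₀ P₁ : ℝ)
    (hP0 : P₀ = v ⬝ᵥ (R⁻¹ *ᵥ v))
    (hP1 : P₁ = v ⬝ᵥ (((2:ℝ)⁻¹ • (R + Rᵀ))⁻¹ *ᵥ v))
    (K : Matrix (Fin n) (Fin n) ℝ)
    (hK : K = (4:ℝ)⁻¹ • (R * (Rᵀ)⁻¹ + Rᵀ * R⁻¹))
    (lmin lmax : ℝ)
    (hmin : IsLeast (spectrum ℝ K) lmin)
    (hmax : IsGreatest (spectrum ℝ K) lmax) :
    0 < P₁ ∧ 0 ≤ 1/2 + lmin ∧ 1/2 + lmin ≤ P₀ / P₁ ∧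
      P₀ / P₁ ≤ 1/2 + lmax ∧ 1/2 + lmax ≤ 1 := by
  set S : Matrix (Fin n) (Fin n) ℝ := (2:ℝ)⁻¹ • (R + Rᵀ) with hSdef
  -- symmetric quadratic form fact
  have hsymq : ∀ (A : Matrix (Fin n) (Fin n) ℝ) (x : Fin n → ℝ),
      x ⬝ᵥ (Aᵀ *ᵥ x) = x ⬝ᵥ (A *ᵥ x) := by
    intro A x
    rw [dotProduct_comm, mulVec_transpose, ← dotProduct_mulVec]
  have hS : S.PosDef := by
    refine Matrix.PosDef.of_dotProduct_mulVec_pos ?_ ?_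
    · show Sᴴ = S
      rw [conjTranspose_eq_transpose_of_trivial]
      simp [hSdef, transpose_smul, transpose_add, add_comm]
    · intro x hx
      have h0 := hR x hx
      have : star x ⬝ᵥ (S *ᵥ x) = x ⬝ᵥ (R *ᵥ x) := by
        simp only [star_trivial, hSdef, smul_mulVec, add_mulVec, dotProduct_smul,
          dotProduct_add, hsymq, smul_eq_mul]
        ring
      rw [this]; exact h0
  have hRunit : IsUnit R := by
    rw [← Matrix.mulVec_injective_iff_isUnit]
    intro x y hxy
    by_contra hne
    have hsub : R *ᵥ (x - y) = 0 := by rw [mulVec_sub, hxy, sub_self]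
    have := hR (x - y) (sub_ne_zero.mpr hne)
    rw [hsub, dotProduct_zero] at this
    exact lt_irrefl _ this
  have hRdet : IsUnit R.det := (Matrix.isUnit_iff_isUnit_det R).mp hRunit
  have hRR : R * R⁻¹ = 1 := mul_nonsing_inv R hRdet
  have hRR' : R⁻¹ * R = 1 := nonsing_inv_mul R hRdet
  have htinv : (Rᵀ)⁻¹ = (R⁻¹)ᵀ := (transpose_nonsing_inv R).symm
  have hRtR : Rᵀ * (R⁻¹)ᵀ = 1 := by rw [← transpose_mul, hRR', transpose_one]
  have hRtR' : (R⁻¹)ᵀ * Rᵀ = 1 := by rw [← transpose_mul, hRR, transpose_one]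
  set H : Matrix (Fin n) (Fin n) ℝ := (2:ℝ)⁻¹ • (R⁻¹ + (R⁻¹)ᵀ) with hHdef
  have hHeq : (R⁻¹)ᵀ * S * R⁻¹ = H := by
    rw [hSdef, hHdef]
    rw [Matrix.mul_smul, Matrix.smul_mul, Matrix.mul_add, Matrix.add_mul,
      Matrix.mul_assoc R⁻¹ᵀ R R⁻¹, hRR, Matrix.mul_one, hRtR', Matrix.one_mul, add_comm]
  have hH : H.PosDef := by
    rw [← hHeq, ← conjTranspose_eq_transpose_of_trivial R⁻¹]
    refine Matrix.PosDef.of_dotProduct_mulVec_pos (isHermitian_conjTranspose_mul_mul R⁻¹ hS.isHermitian) fun x hx => ?_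
    have hBx : R⁻¹ *ᵥ x ≠ 0 := by
      have hinj := Matrix.mulVec_injective_iff_isUnit.mpr (isUnit_nonsing_inv_iff.mpr hRunit)
      intro h
      exact hx (hinj (by simpa using h))
    simpa only [star_mulVec, dotProduct_mulVec, vecMul_vecMul] using hS.dotProduct_mulVec_pos hBx
  -- square root of S
  set B : Matrix (Fin n) (Fin n) ℝ := CFC.sqrt S with hBdef
  have hBpsd : B.PosSemidef := Matrix.nonneg_iff_posSemidef.mp (CFC.sqrt_nonneg S)
  have hB2 : B * B = S := CFC.sqrt_mul_sqrt_self S (Matrix.PosSemidef.nonneg hS.posSemidef)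
  have hBt : Bᵀ = B := by
    have := hBpsd.1
    rwa [IsHermitian, conjTranspose_eq_transpose_of_trivial] at this
  have hBc : Bᴴ = B := by rw [conjTranspose_eq_transpose_of_trivial, hBt]
  have hBdet : IsUnit B.det := by
    have hd : S.det = B.det * B.det := by rw [← hB2, det_mul]
    have hSd := hS.det_pos
    rw [hd] at hSd
    exact isUnit_iff_ne_zero.mpr (by nlinarith)
  have hBunit : IsUnit B := (Matrix.isUnit_iff_isUnit_det B).mpr hBdet
  have hBB : B * B⁻¹ = 1 := mul_nonsing_inv B hBdet
  have hBB' : B⁻¹ * B = 1 := nonsing_inv_mul B hBdet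
  set M' : Matrix (Fin n) (Fin n) ℝ := B * H * B with hM'def
  have hM'psd : M'.PosSemidef := by
    have := hH.posSemidef.mul_mul_conjTranspose_same B
    rwa [hBc] at this
  -- the spectrum identification
  obtain ⟨u, hu⟩ := hBunit
  have huinv : (↑u⁻¹ : Matrix (Fin n) (Fin n) ℝ) = B⁻¹ := by
    rw [Matrix.coe_units_inv, hu]
  have hSH : S * H = algebraMap ℝ (Matrix (Fin n) (Fin n) ℝ) (2:ℝ)⁻¹ + K := by
    rw [hSdef, hHdef, hK, Algebra.algebraMap_eq_smul_one, htinv]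
    rw [Matrix.smul_mul, Matrix.mul_smul, smul_smul, Matrix.add_mul, Matrix.mul_add,
      Matrix.mul_add, hRR, hRtR]
    ext i j
    simp [Matrix.add_apply, Matrix.smul_apply]
    ring
  have hconjSH : S * H = (u : Matrix (Fin n) (Fin n) ℝ) * M' * ((u⁻¹ : (Matrix (Fin n) (Fin n) ℝ)ˣ) : Matrix (Fin n) (Fin n) ℝ) := by
    rw [hu, huinv, hM'def]
    calc S * H = (B * B) * H * (B * B⁻¹) := by rw [hB2, hBB, Matrix.mul_one]
      _ = B * (B * H * B) * B⁻¹ := by simp only [Matrix.mul_assoc]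
  have hspec : spectrum ℝ M' = ({(2:ℝ)⁻¹} : Set ℝ) + spectrum ℝ K := by
    rw [spectrum.singleton_add_eq, ← hSH, hconjSH, spectrum.units_conjugate]
  set c₁ : ℝ := (2:ℝ)⁻¹ + lmin with hc₁def
  set c₂ : ℝ := (2:ℝ)⁻¹ + lmax with hc₂def
  have hc₁mem : c₁ ∈ spectrum ℝ M' := by
    rw [hspec]
    exact Set.add_mem_add rfl hmin.1
  have hc₂mem : c₂ ∈ spectrum ℝ M' := by
    rw [hspec]
    exact Set.add_mem_add rfl hmax.1
  have hbounds : ∀ μ ∈ spectrum ℝ M', c₁ ≤ μ ∧ μ ≤ c₂ := by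
    intro μ hμ
    rw [hspec] at hμ
    obtain ⟨a, ha, b, hb, rfl⟩ := Set.mem_add.mp hμ
    rw [Set.mem_singleton_iff] at ha
    subst ha
    exact ⟨add_le_add_right (hmin.2 hb) _, add_le_add_right (hmax.2 hb) _⟩
  -- PSD of M' - c₁ • 1 and c₂ • 1 - M'
  have hM'herm : M'.IsHermitian := hM'psd.1
  have honeherm : ∀ c : ℝ, (c • (1 : Matrix (Fin n) (Fin n) ℝ)).IsHermitian := by
    intro c
    show (c • (1 : Matrix (Fin n) (Fin n) ℝ))ᴴ = _
    rw [conjTranspose_smul, conjTranspose_one, star_trivial]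
  have hlowpsd : (M' - c₁ • 1).PosSemidef := by
    refine aux_psd_of_forall (hM'herm.sub (honeherm c₁)) ?_
    intro μ hμ
    have heq : M' - c₁ • (1 : Matrix (Fin n) (Fin n) ℝ)
        = algebraMap ℝ (Matrix (Fin n) (Fin n) ℝ) (-c₁) + M' := by
      rw [Algebra.algebraMap_eq_smul_one, neg_smul]
      abel
    rw [heq, ← spectrum.singleton_add_eq] at hμ
    obtain ⟨a, ha, b, hb, rfl⟩ := Set.mem_add.mp hμ
    rw [Set.mem_singleton_iff] at ha
    subst ha
    have := (hbounds b hb).1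
    linarith
  have huppsd : (c₂ • 1 - M').PosSemidef := by
    refine aux_psd_of_forall ((honeherm c₂).sub hM'herm) ?_
    intro μ hμ
    have heq : c₂ • (1 : Matrix (Fin n) (Fin n) ℝ) - M'
        = algebraMap ℝ (Matrix (Fin n) (Fin n) ℝ) c₂ - M' := by
      rw [Algebra.algebraMap_eq_smul_one]
    rw [heq, ← spectrum.singleton_sub_eq] at hμ
    obtain ⟨a, ha, b, hb, rfl⟩ := Set.mem_sub.mp hμ
    rw [Set.mem_singleton_iff] at ha
    subst ha
    have := (hbounds b hb).2
    linarith
  -- 1 - M' is PSD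
  have hSdetu : IsUnit S.det := (Matrix.isUnit_iff_isUnit_det S).mp hS.isUnit
  have hSS : S * S⁻¹ = 1 := mul_nonsing_inv S hSdetu
  have hSS' : S⁻¹ * S = 1 := nonsing_inv_mul S hSdetu
  have hRt : Rᵀ = S + (S - R) := by
    ext i j
    simp [hSdef, Matrix.add_apply, Matrix.sub_apply, Matrix.smul_apply, Matrix.transpose_apply]
    ring
  have key : Rᵀ * S⁻¹ * R - S = (S - R) * S⁻¹ * (R - S) := by
    rw [hRt, add_mul, hSS, add_mul, one_mul, mul_sub ((S - R) * S⁻¹),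
      Matrix.mul_assoc (S - R) S⁻¹ S, hSS', Matrix.mul_one, Matrix.mul_assoc (S - R) S⁻¹ R]
    abel
  have hconj : (R - S)ᴴ = S - R := by
    rw [conjTranspose_eq_transpose_of_trivial, transpose_sub, hRt]
    have hSt : Sᵀ = S := by
      have := hS.isHermitian
      rwa [IsHermitian, conjTranspose_eq_transpose_of_trivial] at this
    rw [hSt]; abel
  have psd1 : (Rᵀ * S⁻¹ * R - S).PosSemidef := by
    rw [key, ← hconj]
    exact (hS.inv.posSemidef).conjTranspose_mul_mul_same (R - S)
  have stepa : S⁻¹ - H = (R⁻¹)ᵀ * (Rᵀ * S⁻¹ * R - S) * R⁻¹ := by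
    rw [mul_sub, sub_mul, hHeq]
    congr 1
    symm
    calc R⁻¹ᵀ * (Rᵀ * S⁻¹ * R) * R⁻¹
        = (R⁻¹ᵀ * Rᵀ) * S⁻¹ * (R * R⁻¹) := by
          simp only [Matrix.mul_assoc]
      _ = S⁻¹ := by rw [hRtR', hRR, Matrix.one_mul, Matrix.mul_one]
  have psdSinvH : (S⁻¹ - H).PosSemidef := by
    rw [stepa, ← conjTranspose_eq_transpose_of_trivial R⁻¹]
    exact psd1.conjTranspose_mul_mul_same R⁻¹
  have hBSinvB : B * S⁻¹ * B = 1 := by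
    rw [← hB2, Matrix.mul_inv_rev]
    calc B * (B⁻¹ * B⁻¹) * B = (B * B⁻¹) * (B⁻¹ * B) := by simp only [Matrix.mul_assoc]
      _ = 1 := by rw [hBB, hBB', Matrix.one_mul]
  have honesubpsd : ((1 : Matrix (Fin n) (Fin n) ℝ) - M').PosSemidef := by
    have heq : (1 : Matrix (Fin n) (Fin n) ℝ) - M' = B * (S⁻¹ - H) * B := by
      rw [mul_sub, sub_mul, hBSinvB, hM'def]
    rw [heq]
    have h := psdSinvH.conjTranspose_mul_mul_same B
    rwa [hBc] at h
  -- relating the quadratic forms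
  set w : Fin n → ℝ := B⁻¹ *ᵥ v with hwdef
  have hvw : B *ᵥ w = v := by
    rw [hwdef, mulVec_mulVec, hBB, one_mulVec]
  have hw0 : w ≠ 0 := by
    intro h
    rw [← hvw, h, mulVec_zero] at hv
    exact hv rfl
  have hBinvT : (B⁻¹)ᵀ = B⁻¹ := by rw [transpose_nonsing_inv, hBt]
  have hP1w : P₁ = w ⬝ᵥ w := by
    rw [hP1, ← hB2, Matrix.mul_inv_rev, ← mulVec_mulVec, ← hwdef,
      dotProduct_mulVec, ← mulVec_transpose, hBinvT, ← hwdef]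
  have hP0w : P₀ = w ⬝ᵥ (M' *ᵥ w) := by
    have h1 : M' *ᵥ w = B *ᵥ (H *ᵥ v) := by
      rw [hM'def, ← mulVec_mulVec, ← mulVec_mulVec, hvw]
    rw [h1, dotProduct_mulVec, ← mulVec_transpose, hBt, hvw]
    rw [hP0, hHdef, smul_mulVec, add_mulVec, dotProduct_smul, dotProduct_add,
      hsymq R⁻¹ v, smul_eq_mul]
    ring
  have hP1pos : 0 < P₁ := by
    rw [hP1w]
    simpa using (dotProduct_star_self_pos_iff (v := w)).mpr hw0
  -- the four inequalities
  have hlow : c₁ * P₁ ≤ P₀ := by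
    have h0 : (0:ℝ) ≤ w ⬝ᵥ ((M' - c₁ • 1) *ᵥ w) := by simpa using hlowpsd.dotProduct_mulVec_nonneg w
    rw [sub_mulVec, smul_mulVec, one_mulVec, dotProduct_sub, dotProduct_smul,
      smul_eq_mul] at h0
    rw [hP0w, hP1w]
    linarith
  have hup : P₀ ≤ c₂ * P₁ := by
    have h0 : (0:ℝ) ≤ w ⬝ᵥ ((c₂ • 1 - M') *ᵥ w) := by simpa using huppsd.dotProduct_mulVec_nonneg w
    rw [sub_mulVec, smul_mulVec, one_mulVec, dotProduct_sub, dotProduct_smul,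
      smul_eq_mul] at h0
    rw [hP0w, hP1w]
    linarith
  have hc₁nonneg : 0 ≤ c₁ := aux_spec_nonneg hM'psd hc₁mem
  have hc₂le1 : c₂ ≤ 1 := by
    have hmem : 1 - c₂ ∈ spectrum ℝ ((1 : Matrix (Fin n) (Fin n) ℝ) - M') := by
      have : (1 : Matrix (Fin n) (Fin n) ℝ) - M'
          = algebraMap ℝ (Matrix (Fin n) (Fin n) ℝ) 1 - M' := by simp
      rw [this, ← spectrum.singleton_sub_eq]
      exact Set.sub_mem_sub rfl hc₂mem
    have := aux_spec_nonneg honesubpsd hmem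
    linarith
  refine ⟨hP1pos, ?_, ?_, ?_, ?_⟩
  · rw [show (1:ℝ)/2 + lmin = c₁ by rw [hc₁def]; ring]
    exact hc₁nonneg
  · rw [show (1:ℝ)/2 + lmin = c₁ by rw [hc₁def]; ring, le_div_iff₀ hP1pos]
    exact hlow
  · rw [show (1:ℝ)/2 + lmax = c₂ by rw [hc₂def]; ring, div_le_iff₀ hP1pos]
    exact hup
  · rw [show (1:ℝ)/2 + lmax = c₂ by rw [hc₂def]; ring]
    exact hc₂le1
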